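/- For all x, y ∈ ℂ, a · 𝓕₂⁽¹⁾(a + 1, b₁, b₂; c₁, c₂; t₁, t₂, k₁, k₂, x, y) = a · 𝓕₂⁽¹⁾(a, b₁, b₂; c₁, c₂; t₁, t₂, k₁, k₂, x, y) + x · ∂/∂x 𝓕₂⁽¹⁾(a, b₁, b₂; c₁, c₂; t₁, t₂, k₁, k₂, x, y) + y · ∂/∂y 𝓕₂⁽¹⁾(a, b₁, b₂; c₁, c₂; t₁, t₂, k₁, k₂, x, y), where ∂/∂x and ∂/∂y denote the partial derivatives of the polynomial function (x,y) ↦ 𝓕₂⁽¹⁾(a,…,x,y). (This is the contiguous relation a𝓕₂⁽¹⁾(a+1) = (a + θ + φ)𝓕₂⁽¹⁾ with θ = x∂/∂x, φ = y∂/∂y.) -/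

import Mathlib

open Complex Finset

/-- Ascending Pochhammer symbol `(z)_j = z (z+1) ⋯ (z+j−1)`, with `(z)_0 = 1`. -/
noncomputable def poch (z : ℂ) (j : ℕ) : ℂ := (ascPochhammer ℂ j).eval z

/-- The first discrete Appell function `𝓕₂⁽¹⁾(a,b₁,b₂;c₁,c₂;t₁,t₂,k₁,k₂,x,y)`.
Since `(−t₁)_{m k₁} = 0` once `m k₁ > t₁` and `(−t₂)_{n k₂} = 0` once `n k₂ > t₂`
(for `k₁, k₂ ≥ 1`), the doubly infinite sum reduces to this finite sum. -/
noncomputable def F2one (a b₁ b₂ c₁ c₂ : ℂ) (t₁ t₂ k₁ k₂ : ℕ) (x y : ℂ) : ℂ :=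
  ∑ m ∈ Finset.range (t₁ + 1), ∑ n ∈ Finset.range (t₂ + 1),
    poch a (m + n) * poch b₁ m * poch b₂ n * (-1 : ℂ) ^ (m * k₁) * poch (-(t₁ : ℂ)) (m * k₁)
      * (-1 : ℂ) ^ (n * k₂) * poch (-(t₂ : ℂ)) (n * k₂) * x ^ m * y ^ n
    / (poch c₁ m * poch c₂ n * (Nat.factorial m : ℂ) * (Nat.factorial n : ℂ))

lemma poch_key (a : ℂ) (j : ℕ) : a * poch (a + 1) j = poch a j * (a + j) := by
  have h1 := congrArg (Polynomial.eval a) (ascPochhammer_succ_left (S := ℂ) j)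
  have h2 := congrArg (Polynomial.eval a) (ascPochhammer_succ_right (S := ℂ) j)
  simp only [Polynomial.eval_mul, Polynomial.eval_comp, Polynomial.eval_add,
    Polynomial.eval_X, Polynomial.eval_one, Polynomial.eval_natCast] at h1 h2
  unfold poch
  rw [← h1, h2]

lemma deriv_helper (T₁ T₂ : ℕ) (c : ℕ → ℕ → ℂ) (p : ℕ → ℕ → ℕ) (x : ℂ) :
    x * deriv (fun s : ℂ => ∑ m ∈ Finset.range T₁, ∑ n ∈ Finset.range T₂,
        c m n * s ^ (p m n)) x
      = ∑ m ∈ Finset.range T₁, ∑ n ∈ Finset.range T₂,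
        ((p m n : ℂ)) * (c m n * x ^ (p m n)) := by
  have h : HasDerivAt (fun s : ℂ => ∑ m ∈ Finset.range T₁, ∑ n ∈ Finset.range T₂,
      c m n * s ^ (p m n))
      (∑ m ∈ Finset.range T₁, ∑ n ∈ Finset.range T₂,
        c m n * ((p m n : ℂ) * x ^ (p m n - 1))) x := by
    apply HasDerivAt.fun_sum; intro m _
    apply HasDerivAt.fun_sum; intro n _
    exact (hasDerivAt_pow (p m n) x).const_mul _
  rw [h.deriv, Finset.mul_sum]
  refine Finset.sum_congr rfl fun m _ => ?_
  rw [Finset.mul_sum]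
  refine Finset.sum_congr rfl fun n _ => ?_
  rcases hp : p m n with _ | q
  · simp [hp]
  · push_cast
    simp only [Nat.add_sub_cancel, pow_succ]
    ring

/-- The contiguous relation `a 𝓕₂⁽¹⁾(a+1) = (a + θ + φ) 𝓕₂⁽¹⁾`, with `θ = x ∂/∂x`,
`φ = y ∂/∂y`. -/
theorem contiguous_relation_a_up (a b₁ b₂ c₁ c₂ : ℂ) (k₁ k₂ : ℕ)
    (hk₁ : 0 < k₁) (hk₂ : 0 < k₂)
    (hc₁ : ∀ n : ℕ, c₁ ≠ -(n : ℂ)) (hc₂ : ∀ n : ℕ, c₂ ≠ -(n : ℂ))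
    (t₁ t₂ : ℕ) (x y : ℂ) :
    a * F2one (a + 1) b₁ b₂ c₁ c₂ t₁ t₂ k₁ k₂ x y =
      a * F2one a b₁ b₂ c₁ c₂ t₁ t₂ k₁ k₂ x y +
        x * deriv (fun s : ℂ => F2one a b₁ b₂ c₁ c₂ t₁ t₂ k₁ k₂ s y) x +
        y * deriv (fun s : ℂ => F2one a b₁ b₂ c₁ c₂ t₁ t₂ k₁ k₂ x s) y := by
  set cX : ℕ → ℕ → ℂ := fun m n =>
    poch a (m + n) * poch b₁ m * poch b₂ n * (-1 : ℂ) ^ (m * k₁) * poch (-(t₁ : ℂ)) (m * k₁)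
      * (-1 : ℂ) ^ (n * k₂) * poch (-(t₂ : ℂ)) (n * k₂) * y ^ n
    / (poch c₁ m * poch c₂ n * (Nat.factorial m : ℂ) * (Nat.factorial n : ℂ)) with hcX
  set cY : ℕ → ℕ → ℂ := fun m n =>
    poch a (m + n) * poch b₁ m * poch b₂ n * (-1 : ℂ) ^ (m * k₁) * poch (-(t₁ : ℂ)) (m * k₁)
      * (-1 : ℂ) ^ (n * k₂) * poch (-(t₂ : ℂ)) (n * k₂) * x ^ m
    / (poch c₁ m * poch c₂ n * (Nat.factorial m : ℂ) * (Nat.factorial n : ℂ)) with hcY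
  have hfx : (fun s : ℂ => F2one a b₁ b₂ c₁ c₂ t₁ t₂ k₁ k₂ s y)
      = fun s : ℂ => ∑ m ∈ Finset.range (t₁ + 1), ∑ n ∈ Finset.range (t₂ + 1),
          cX m n * s ^ m := by
    funext s
    unfold F2one
    refine Finset.sum_congr rfl fun m _ => Finset.sum_congr rfl fun n _ => ?_
    simp only [hcX]
    ring
  have hfy : (fun s : ℂ => F2one a b₁ b₂ c₁ c₂ t₁ t₂ k₁ k₂ x s)
      = fun s : ℂ => ∑ m ∈ Finset.range (t₁ + 1), ∑ n ∈ Finset.range (t₂ + 1),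
          cY m n * s ^ n := by
    funext s
    unfold F2one
    refine Finset.sum_congr rfl fun m _ => Finset.sum_congr rfl fun n _ => ?_
    simp only [hcY]
    ring
  rw [hfx, hfy,
    deriv_helper (t₁ + 1) (t₂ + 1) cX (fun m _ => m) x,
    deriv_helper (t₁ + 1) (t₂ + 1) cY (fun _ n => n) y]
  unfold F2one
  rw [Finset.mul_sum, Finset.mul_sum, ← Finset.sum_add_distrib, ← Finset.sum_add_distrib]
  refine Finset.sum_congr rfl fun m _ => ?_
  rw [Finset.mul_sum, Finset.mul_sum, ← Finset.sum_add_distrib, ← Finset.sum_add_distrib]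
  refine Finset.sum_congr rfl fun n _ => ?_
  simp only [hcX, hcY]
  have h := poch_key a (m + n)
  push_cast at h
  linear_combination (poch b₁ m * poch b₂ n * (-1 : ℂ) ^ (m * k₁) * poch (-(t₁ : ℂ)) (m * k₁)
      * (-1 : ℂ) ^ (n * k₂) * poch (-(t₂ : ℂ)) (n * k₂) * x ^ m * y ^ n /
      (poch c₁ m * poch c₂ n * (Nat.factorial m : ℂ) * (Nat.factorial n : ℂ))) * h
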